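/- Let λ = (λ_1,…,λ_n) ∈ ℝⁿ with λ_1 > λ_2 > … > λ_n, and let q = ᵗp(λ⁻) be the dual of the Robinson–Schensted shape of λ⁻. Then q_j = 0 for j ≥ 3 (the shape has at most two columns), q_1 + q_2 = 2n, q_1^odd + q_2^odd = n, and n² − F_b(λ⁻) = q_2^odd · (2n + 1 − 2·q_2^odd), where F_b(λ⁻) = Σ_{i≥1}(i−1)·p(λ⁻)_i^odd = (q_1^odd)² + q_2^odd(q_2^odd − 1). -/

import Mathlib

/-- Greene invariant `c_k(x)` of the length-`N` sequence `x` (positions `1,…,N`). -/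
noncomputable def greeneC {α : Type*} [LinearOrder α] (N : ℕ) (x : ℕ → α) (k : ℕ) : ℕ :=
  sSup {m : ℕ | ∃ S : Finset ℕ, (∀ i ∈ S, 1 ≤ i ∧ i ≤ N) ∧ m = S.card ∧
    ∃ f : ℕ → Fin k, ∀ i ∈ S, ∀ j ∈ S, i < j → f i = f j → x i ≤ x j}

/-- The Robinson–Schensted shape of `x`, via Greene's theorem:
`p(x)_k = c_k(x) − c_{k−1}(x)`. -/
noncomputable def rsShape {α : Type*} [LinearOrder α] (N : ℕ) (x : ℕ → α) (k : ℕ) : ℕ :=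
  greeneC N x k - greeneC N x (k - 1)

/-- For a length-`n` sequence `x` (positions `1,…,n`), the length-`2n` sequence
`x⁻ = (x_1,…,x_n,−x_n,…,−x_1)` (positions `1,…,2n`). -/
def supMinus (n : ℕ) (x : ℕ → ℝ) : ℕ → ℝ := fun i =>
  if i ≤ n then x i else -x (2 * n + 1 - i)

/-- The dual partition: `q_j = #{i ≥ 1 : p_i ≥ j}`. -/
noncomputable def dualPart (p : ℕ → ℕ) (j : ℕ) : ℕ :=
  Set.ncard {i : ℕ | 1 ≤ i ∧ j ≤ p i}

/-- The number of odd boxes in row `i` of the Young diagram of `p`. -/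
def rowOdd (p : ℕ → ℕ) (i : ℕ) : ℕ :=
  ((Finset.Icc 1 (p i)).filter fun j => Odd (i + j)).card

/-- The number of odd boxes in column `j`, where `q` is the dual partition. -/
def colOdd (q : ℕ → ℕ) (j : ℕ) : ℕ :=
  ((Finset.Icc 1 (q j)).filter fun i => Odd (i + j)).card

/-- The Robinson–Schensted shape `p(λ⁻)` of `λ⁻`. -/
noncomputable def pShape (n : ℕ) (lam : ℕ → ℝ) : ℕ → ℕ :=
  rsShape (2 * n) (supMinus n lam)

/-- The dual partition `q = ᵗp(λ⁻)`. -/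
noncomputable def qShape (n : ℕ) (lam : ℕ → ℝ) : ℕ → ℕ :=
  dualPart (pShape n lam)

/-- `F_b(λ⁻) = Σ_{i≥1} (i−1)·p(λ⁻)_i^odd`. -/
noncomputable def Fb (n : ℕ) (lam : ℕ → ℝ) : ℕ :=
  ∑ᶠ (i : ℕ) (_ : 1 ≤ i), (i - 1) * rowOdd (pShape n lam) i



lemma count_parity (m : ℕ) :
    (((Finset.Icc 1 m).filter fun i => Even i).card = m / 2) ∧
    (((Finset.Icc 1 m).filter fun i => ¬ Even i).card = (m + 1) / 2) := by
  induction m with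
  | zero => simp
  | succ m ih =>
    have h : Finset.Icc 1 (m + 1) = insert (m + 1) (Finset.Icc 1 m) :=
      (Finset.insert_Icc_right_eq_Icc_add_one (by omega)).symm
    rw [h, Finset.filter_insert, Finset.filter_insert]
    rcases Nat.even_or_odd m with he | ho
    · obtain ⟨t, ht⟩ := he
      have h1 : ¬ Even (m + 1) := by simp [Nat.even_add_one]; exact ⟨t, ht⟩
      rw [if_neg h1, if_pos h1, Finset.card_insert_of_notMem (by simp), ih.1, ih.2]
      omega
    · obtain ⟨t, ht⟩ := ho
      have h1 : Even (m + 1) := ⟨t + 1, by omega⟩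
      rw [if_pos h1, if_neg (by simp [h1]), Finset.card_insert_of_notMem (by simp), ih.1, ih.2]
      omega

lemma sum_Icc_pred (m : ℕ) : (∑ i ∈ Finset.Icc 1 m, (i - 1)) * 2 = m * (m - 1) := by
  induction m with
  | zero => simp
  | succ m ih =>
    rw [Finset.sum_Icc_succ_top (by omega)]
    have : (m + 1) * (m + 1 - 1) = m * (m - 1) + 2 * m := by
      cases m with
      | zero => rfl
      | succ k => simp [Nat.succ_sub_one]; ring
    omega

lemma odd_sum (a b : ℕ) (hab : a ≤ b) :
    (∑ i ∈ Finset.Icc (2 * a + 1) (2 * b), (if Even i then i - 1 else 0)) = b * b - a * a := by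
  induction b, hab using Nat.le_induction with
  | base => simp [Nat.Icc_eq_range', Nat.sub_self]
  | succ b hb ih =>
    have h1 : 2 * (b + 1) = (2 * b + 1) + 1 := by ring
    rw [h1, Finset.sum_Icc_succ_top (by omega),
      Finset.sum_Icc_succ_top (by omega), ih]
    have he : Even (2 * b + 1 + 1) := ⟨b + 1, by ring⟩
    have ho : ¬ Even (2 * b + 1) := by simp [Nat.even_add_one]
    rw [if_pos he, if_neg ho]
    have e1 : (b + 1) * (b + 1) = b * b + 2 * b + 1 := by ring
    have e2 : a * a ≤ b * b := Nat.mul_le_mul hb hb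
    omega

lemma odd_sum' (a b : ℕ) (hab : a ≤ b) :
    (∑ i ∈ Finset.Icc (2 * a + 1) (2 * b + 1), (if Even i then i - 1 else 0)) = b * b - a * a := by
  rw [Finset.sum_Icc_succ_top (by omega), odd_sum a b hab,
    if_neg (by simp [Nat.even_add_one])]
  omega

/-- The matching-number invariant `M`. -/
noncomputable def MM (n : ℕ) (lam : ℕ → ℝ) : ℕ :=
  @Nat.findGreatest
    (fun m => ∀ k, 1 ≤ k → k ≤ m → lam (n - m + k) + lam (n + 1 - k) ≤ 0)
    (Classical.decPred _) n

section
variable {n : ℕ} {lam : ℕ → ℝ}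

lemma lam_strict (hdec : ∀ i, 1 ≤ i → i < n → lam (i + 1) < lam i) :
    ∀ j, ∀ i, 1 ≤ i → i < j → j ≤ n → lam j < lam i := by
  intro j
  induction j with
  | zero => omega
  | succ j ih =>
    intro i h1 h2 h3
    rcases eq_or_lt_of_le (Nat.lt_succ_iff.mp h2) with h | h
    · subst h; exact hdec i h1 (by omega)
    · exact lt_trans (hdec j (by omega) (by omega)) (ih i h1 h (by omega))

lemma lam_anti (hdec : ∀ i, 1 ≤ i → i < n → lam (i + 1) < lam i) :
    ∀ i j, 1 ≤ i → i ≤ j → j ≤ n → lam j ≤ lam i := by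
  intro i j h1 h2 h3
  rcases eq_or_lt_of_le h2 with h | h
  · subst h; rfl
  · exact le_of_lt (lam_strict hdec j i h1 h h3)

lemma MM_le : MM n lam ≤ n := by unfold MM; exact @Nat.findGreatest_le _ (Classical.decPred _) n

lemma MM_good : ∀ k, 1 ≤ k → k ≤ MM n lam →
    lam (n - MM n lam + k) + lam (n + 1 - k) ≤ 0 := by
  unfold MM
  exact @Nat.findGreatest_spec 0
    (fun m => ∀ k, 1 ≤ k → k ≤ m → lam (n - m + k) + lam (n + 1 - k) ≤ 0)
    (Classical.decPred _) n (by omega) (by intro k hk1 hk2; omega)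

/-- downward closure of goodness -/
lemma good_mono (hdec : ∀ i, 1 ≤ i → i < n → lam (i + 1) < lam i) {m m' : ℕ} (hm : m ≤ n) (hm' : m' ≤ m)
    (hg : ∀ k, 1 ≤ k → k ≤ m → lam (n - m + k) + lam (n + 1 - k) ≤ 0) :
    ∀ k, 1 ≤ k → k ≤ m' → lam (n - m' + k) + lam (n + 1 - k) ≤ 0 := by
  intro k hk1 hk2
  have h := hg k hk1 (le_trans hk2 hm')
  have : lam (n - m' + k) ≤ lam (n - m + k) :=
    lam_anti hdec (n - m + k) (n - m' + k) (by omega) (by omega) (by omega)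
  linarith

/-- a matching gives a lower bound on `MM` -/
lemma matching_le (hdec : ∀ i, 1 ≤ i → i < n → lam (i + 1) < lam i)
    {γ : Type*} [DecidableEq γ] (T : Finset γ) (a b : γ → ℕ)
    (ha : ∀ c ∈ T, 1 ≤ a c ∧ a c ≤ n) (hb : ∀ c ∈ T, 1 ≤ b c ∧ b c ≤ n)
    (hab : ∀ c ∈ T, lam (a c) + lam (b c) ≤ 0)
    (hai : Set.InjOn a T) (hbi : Set.InjOn b T) :
    T.card ≤ MM n lam := by
  set m := T.card with hm
  have hmn : m ≤ n := by
    have := Finset.card_le_card_of_injOn a (fun c hc => Finset.mem_Icc.mpr ⟨(ha c hc).1, (ha c hc).2⟩) hai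
    simpa using this
  unfold MM
  refine @Nat.le_findGreatest m _ (Classical.decPred _) n hmn ?_
  intro k hk1 hk2
  -- find c with a c ≤ n - m + k and b c ≤ n + 1 - k
  have hA : m - (m - k) ≤ (T.filter fun c => a c ≤ n - m + k).card := by
    have h1 : (T.filter fun c => ¬ (a c ≤ n - m + k)).card ≤ m - k := by
      have hmem : ∀ c ∈ (T.filter fun c => ¬ (a c ≤ n - m + k)), a c ∈ Finset.Icc (n - m + k + 1) n := by
        intro c hc
        simp only [Finset.mem_filter] at hc
        exact Finset.mem_Icc.mpr ⟨by omega, (ha c hc.1).2⟩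
      have := Finset.card_le_card_of_injOn a hmem (hai.mono (by
        intro c hc; exact Finset.mem_coe.mpr (Finset.mem_of_mem_filter c (Finset.mem_coe.mp hc))))
      simp only [Nat.card_Icc] at this
      omega
    have h2 := Finset.card_filter_add_card_filter_not
      (s := T) (p := fun c => a c ≤ n - m + k)
    omega
  have hB : m - (k - 1) ≤ (T.filter fun c => b c ≤ n + 1 - k).card := by
    have h1 : (T.filter fun c => ¬ (b c ≤ n + 1 - k)).card ≤ k - 1 := by
      have hmem : ∀ c ∈ (T.filter fun c => ¬ (b c ≤ n + 1 - k)), b c ∈ Finset.Icc (n + 2 - k) n := by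
        intro c hc
        simp only [Finset.mem_filter] at hc
        exact Finset.mem_Icc.mpr ⟨by omega, (hb c hc.1).2⟩
      have := Finset.card_le_card_of_injOn b hmem (hbi.mono (by
        intro c hc; exact Finset.mem_coe.mpr (Finset.mem_of_mem_filter c (Finset.mem_coe.mp hc))))
      simp only [Nat.card_Icc] at this
      omega
    have h2 := Finset.card_filter_add_card_filter_not
      (s := T) (p := fun c => b c ≤ n + 1 - k)
    omega
  -- the two filters intersect
  have hinter : ((T.filter fun c => a c ≤ n - m + k) ∩ (T.filter fun c => b c ≤ n + 1 - k)).Nonempty := by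
    rw [← Finset.card_pos]
    have hu : ((T.filter fun c => a c ≤ n - m + k) ∪ (T.filter fun c => b c ≤ n + 1 - k)).card ≤ m := by
      apply Finset.card_le_card
      intro c hc
      rcases Finset.mem_union.mp hc with h | h <;> exact Finset.mem_of_mem_filter c h
    have := Finset.card_union_add_card_inter (T.filter fun c => a c ≤ n - m + k)
      (T.filter fun c => b c ≤ n + 1 - k)
    omega
  obtain ⟨c, hc⟩ := hinter
  simp only [Finset.mem_inter, Finset.mem_filter] at hc
  obtain ⟨⟨hcT, hca⟩, _, hcb⟩ := hc
  have l1 : lam (n - m + k) ≤ lam (a c) := lam_anti hdec (a c) (n - m + k) (ha c hcT).1 hca (by omega)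
  have l2 : lam (n + 1 - k) ≤ lam (b c) := lam_anti hdec (b c) (n + 1 - k) (hb c hcT).1 hcb (by omega)
  have := hab c hcT
  linarith

end

section main
variable {n : ℕ} {lam : ℕ → ℝ}

lemma supMinus_lo (hi : 1 ≤ i) (hn : i ≤ n) : supMinus n lam i = lam i := by
  simp [supMinus, hn]

lemma supMinus_hi (hi : n + 1 ≤ i) (hn : i ≤ 2 * n) :
    supMinus n lam i = - lam (2 * n + 1 - i) := by
  simp [supMinus, show ¬ i ≤ n by omega]

/-- in a chain, the smaller position is in the first half, larger in second -/
lemma chain_struct (hdec : ∀ i, 1 ≤ i → i < n → lam (i + 1) < lam i)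
    {i j : ℕ} (hi1 : 1 ≤ i) (hj : j ≤ 2 * n) (hij : i < j)
    (hle : supMinus n lam i ≤ supMinus n lam j) :
    i ≤ n ∧ n + 1 ≤ j ∧ lam i + lam (2 * n + 1 - j) ≤ 0 := by
  by_cases hin : i ≤ n
  · by_cases hjn : j ≤ n
    · exfalso
      rw [supMinus_lo hi1 hin, supMinus_lo (by omega) hjn] at hle
      exact absurd hle (not_le.mpr (lam_strict hdec j i hi1 hij hjn))
    · refine ⟨hin, by omega, ?_⟩
      rw [supMinus_lo hi1 hin, supMinus_hi (by omega) hj] at hle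
      linarith
  · exfalso
    rw [supMinus_hi (by omega) (by omega), supMinus_hi (by omega) hj] at hle
    have : lam (2 * n + 1 - i) < lam (2 * n + 1 - j) :=
      lam_strict hdec (2 * n + 1 - i) (2 * n + 1 - j) (by omega) (by omega) (by omega)
    linarith

lemma greeneC_le (hdec : ∀ i, 1 ≤ i → i < n → lam (i + 1) < lam i) (k : ℕ) :
    greeneC (2 * n) (supMinus n lam) k ≤ min (2 * k) (min (k + MM n lam) (2 * n)) := by
  classical
  refine csSup_le' ?_
  rintro m ⟨S, hS, rfl, f, hf⟩
  -- fibers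
  set F : Fin k → Finset ℕ := fun c => S.filter fun i => f i = c with hF
  have hcard : S.card = ∑ c : Fin k, (F c).card :=
    Finset.card_eq_sum_card_fiberwise (fun i _ => Finset.mem_univ (f i))
  have fiber_pair : ∀ c : Fin k, 2 ≤ (F c).card →
      ∃ i ∈ F c, ∃ j ∈ F c, i < j ∧ i ≤ n ∧ n + 1 ≤ j ∧ lam i + lam (2 * n + 1 - j) ≤ 0 := by
    intro c hc
    obtain ⟨i, hi, j, hj, hij⟩ := Finset.one_lt_card.mp (show 1 < (F c).card by omega)
    have hiS : i ∈ S := Finset.mem_of_mem_filter i hi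
    have hjS : j ∈ S := Finset.mem_of_mem_filter j hj
    have hfi : f i = c := (Finset.mem_filter.mp hi).2
    have hfj : f j = c := (Finset.mem_filter.mp hj).2
    rcases lt_or_gt_of_ne hij with h | h
    · have := hf i hiS j hjS h (by rw [hfi, hfj])
      have hcs := chain_struct hdec (hS i hiS).1 (hS j hjS).2 h this
      exact ⟨i, hi, j, hj, h, hcs⟩
    · have := hf j hjS i hiS h (by rw [hfi, hfj])
      have hcs := chain_struct hdec (hS j hjS).1 (hS i hiS).2 h this
      exact ⟨j, hj, i, hi, h, hcs⟩
  have fiber_le : ∀ c : Fin k, (F c).card ≤ 2 := by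
    intro c
    by_contra hcon
    obtain ⟨i, hi, j, hj, hij, hin, hjn, _⟩ := fiber_pair c (by omega)
    have hiS' : i ∈ S := Finset.mem_of_mem_filter i hi
    have hjS' : j ∈ S := Finset.mem_of_mem_filter j hj
    -- F c has ≥ 3 elements, i ≤ n < j; a third element contradicts
    have h3 : 3 ≤ (F c).card := by omega
    have : ∃ l ∈ F c, l ≠ i ∧ l ≠ j := by
      by_contra hno
      push_neg at hno
      have hsub : F c ⊆ {i, j} := by
        intro l hl
        by_cases h : l = i
        · simp [h]
        · simp [hno l hl h]
      have h4 := Finset.card_le_card hsub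
      have h5 : ({i, j} : Finset ℕ).card = 2 := Finset.card_pair (by omega)
      omega
    obtain ⟨l, hl, hli, hlj⟩ := this
    have hlS : l ∈ S := Finset.mem_of_mem_filter l hl
    have hfl : f l = f i := by
      rw [(Finset.mem_filter.mp hl).2, (Finset.mem_filter.mp hi).2]
    have hfl' : f l = f j := by
      rw [(Finset.mem_filter.mp hl).2, (Finset.mem_filter.mp hj).2]
    -- l is in one of the halves; contradiction with i or j in same half
    by_cases hln : l ≤ n
    · rcases lt_or_gt_of_ne hli with h | h
      · obtain ⟨c1, c2, -⟩ := chain_struct hdec (hS l hlS).1 (hS i hiS').2 h (hf l hlS i hiS' h hfl)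
        omega
      · obtain ⟨c1, c2, -⟩ := chain_struct hdec (hS i hiS').1 (hS l hlS).2 h (hf i hiS' l hlS h hfl.symm)
        omega
    · rcases lt_or_gt_of_ne hlj with h | h
      · obtain ⟨c1, c2, -⟩ := chain_struct hdec (hS l hlS).1 (hS j hjS').2 h (hf l hlS j hjS' h hfl')
        omega
      · obtain ⟨c1, c2, -⟩ := chain_struct hdec (hS j hjS').1 (hS l hlS).2 h (hf j hjS' l hlS h hfl'.symm)
        omega
  refine le_min ?_ (le_min ?_ ?_)
  · -- ≤ 2k
    rw [hcard]
    calc ∑ c : Fin k, (F c).card ≤ ∑ _c : Fin k, 2 :=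
          Finset.sum_le_sum (fun c _ => fiber_le c)
      _ = 2 * k := by simp [mul_comm]
  · -- ≤ k + M
    set D := Finset.univ.filter (fun c : Fin k => 2 ≤ (F c).card) with hD
    have h1 : S.card ≤ k + D.card := by
      rw [hcard]
      have hpt : ∀ c : Fin k, (F c).card ≤ 1 + (if 2 ≤ (F c).card then 1 else 0) := by
        intro c; have := fiber_le c; split_ifs <;> omega
      calc ∑ c : Fin k, (F c).card
          ≤ ∑ c : Fin k, (1 + if 2 ≤ (F c).card then 1 else 0) :=
            Finset.sum_le_sum fun c _ => hpt c
        _ = k + D.card := by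
            rw [Finset.sum_add_distrib, Finset.sum_boole]
            simp [hD]
    have h2 : D.card ≤ MM n lam := by
      set a : Fin k → ℕ := fun c => if h : (F c).Nonempty then (F c).min' h else 0 with ha
      set b : Fin k → ℕ := fun c => if h : (F c).Nonempty then 2 * n + 1 - (F c).max' h else 0 with hb
      have key : ∀ c ∈ D, a c ∈ F c ∧ (2 * n + 1 - b c) ∈ F c ∧ a c ≤ n ∧
          n + 1 ≤ 2 * n + 1 - b c ∧ 2 * n + 1 - b c ≤ 2 * n ∧ lam (a c) + lam (b c) ≤ 0 := by
        intro c hcD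
        have hc2 : 2 ≤ (F c).card := (Finset.mem_filter.mp hcD).2
        have hne : (F c).Nonempty := Finset.card_pos.mp (by omega)
        have hac : a c = (F c).min' hne := by rw [ha]; simp [hne]
        have hmax : (F c).max' hne ∈ F c := Finset.max'_mem _ _
        have hmaxS : (F c).max' hne ∈ S := Finset.mem_of_mem_filter _ hmax
        have hmax2n : (F c).max' hne ≤ 2 * n := (hS _ hmaxS).2
        have hbc : b c = 2 * n + 1 - (F c).max' hne := by rw [hb]; simp [hne]
        obtain ⟨i, hi, j, hj, hij, hin, hjn, hsum⟩ := fiber_pair c hc2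
        have hminS : (F c).min' hne ∈ S := Finset.mem_of_mem_filter _ (Finset.min'_mem _ _)
        have hminle : (F c).min' hne ≤ i := Finset.min'_le _ i hi
        have hmaxge : j ≤ (F c).max' hne := Finset.le_max' _ j hj
        have hlt : (F c).min' hne < (F c).max' hne := by omega
        have hchain := hf _ hminS _ hmaxS hlt (by
          rw [(Finset.mem_filter.mp (Finset.min'_mem (F c) hne)).2,
            (Finset.mem_filter.mp hmax).2])
        obtain ⟨p1, p2, p3⟩ := chain_struct hdec (hS _ hminS).1 hmax2n hlt hchain
        refine ⟨by rw [hac]; exact Finset.min'_mem _ _, ?_, by omega, by omega, by omega, ?_⟩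
        · rw [hbc, show 2 * n + 1 - (2 * n + 1 - (F c).max' hne) = (F c).max' hne by omega]
          exact hmax
        · rw [hac, hbc]; exact p3
      have := matching_le hdec D a b
        (fun c hc => ⟨(hS _ (Finset.mem_of_mem_filter _ (key c hc).1)).1, (key c hc).2.2.1⟩)
        (fun c hc => by
          have h1 := (key c hc).2.2.2.1
          have h2 := (key c hc).2.2.2.2.1
          exact ⟨by omega, by omega⟩)
        (fun c hc => (key c hc).2.2.2.2.2)
        (by
          intro c hc c' hc' hacc
          have h1 := (Finset.mem_filter.mp (key c (Finset.mem_coe.mp hc)).1).2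
          have h2 := (Finset.mem_filter.mp (key c' (Finset.mem_coe.mp hc')).1).2
          rw [← h1, ← h2, hacc])
        (by
          intro c hc c' hc' hbcc
          have e1 := (key c (Finset.mem_coe.mp hc)).2.1
          have e2 := (key c' (Finset.mem_coe.mp hc')).2.1
          have h1 := (Finset.mem_filter.mp e1).2
          have h2 := (Finset.mem_filter.mp e2).2
          rw [← h1, ← h2, hbcc])
      exact this
    exact h1.trans (Nat.add_le_add_left h2 k)
  · -- ≤ 2n
    have hsub : S ⊆ Finset.Icc 1 (2 * n) := fun i hi =>
      Finset.mem_Icc.mpr ⟨(hS i hi).1, (hS i hi).2⟩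
    have := Finset.card_le_card hsub
    simpa [Nat.card_Icc] using this

lemma greeneC_ge (hdec : ∀ i, 1 ≤ i → i < n → lam (i + 1) < lam i) (k : ℕ) :
    min (2 * k) (min (k + MM n lam) (2 * n)) ≤ greeneC (2 * n) (supMinus n lam) k := by
  classical
  rcases Nat.eq_zero_or_pos k with hk0 | hk0
  · simp [hk0]
  set M := MM n lam with hM
  have hMn : M ≤ n := MM_le
  set P := min k M with hP
  set s := min (k - P) (2 * n - 2 * P) with hs
  set s1 := min s (n - P) with hs1
  set r := s - s1 with hr
  set v := min (2 * k) (min (k + M) (2 * n)) with hv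
  have hPM : P ≤ M := min_le_right _ _
  have hPk : P ≤ k := min_le_left _ _
  have hPn : P ≤ n := le_trans hPM hMn
  have hs1n : s1 ≤ n - P := min_le_right _ _
  have hsk : s ≤ k - P := min_le_left _ _
  have hrange : n + P + r ≤ 2 * n := by omega
  have hveq : v = 2 * P + s := by omega
  -- the witness set
  set S : Finset ℕ := Finset.Icc 1 s1 ∪ Finset.Icc (n - P + 1) (n + P + r) with hS
  have hScard : S.card = v := by
    rw [hS, Finset.card_union_of_disjoint (by
      apply Finset.disjoint_left.mpr
      intro i hi1 hi2
      simp only [Finset.mem_Icc] at hi1 hi2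
      omega)]
    simp only [Nat.card_Icc]
    omega
  have hgood : ∀ t, 1 ≤ t → t ≤ P → lam (n - P + t) + lam (n + 1 - t) ≤ 0 :=
    good_mono hdec hMn hPM MM_good
  -- the class function
  set g : ℕ → ℕ := fun i =>
    if i ≤ s1 then P + i - 1
    else if i ≤ n then i - (n - P + 1)
    else if i ≤ n + P then i - (n + 1)
    else P + s1 + (i - (n + P + 1)) with hg
  have hmem : ∀ i ∈ S,
      (1 ≤ i ∧ i ≤ s1 ∧ g i = P + i - 1) ∨
      (n - P + 1 ≤ i ∧ i ≤ n ∧ g i = i - (n - P + 1)) ∨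
      (n + 1 ≤ i ∧ i ≤ n + P ∧ g i = i - (n + 1)) ∨
      (n + P + 1 ≤ i ∧ i ≤ n + P + r ∧ g i = P + s1 + (i - (n + P + 1))) := by
    intro i hi
    rw [hS, Finset.mem_union, Finset.mem_Icc, Finset.mem_Icc] at hi
    rcases hi with ⟨h1, h2⟩ | ⟨h1, h2⟩
    · exact Or.inl ⟨h1, h2, by simp [hg, h2]⟩
    · by_cases c1 : i ≤ n
      · refine Or.inr (Or.inl ⟨h1, c1, ?_⟩)
        simp [hg, show ¬ i ≤ s1 by omega, c1]
      · by_cases c2 : i ≤ n + P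
        · refine Or.inr (Or.inr (Or.inl ⟨by omega, c2, ?_⟩))
          simp [hg, show ¬ i ≤ s1 by omega, c1, c2]
        · refine Or.inr (Or.inr (Or.inr ⟨by omega, h2, ?_⟩))
          simp [hg, show ¬ i ≤ s1 by omega, c1, c2]
  have hglt : ∀ i ∈ S, g i < k := by
    intro i hi
    rcases hmem i hi with ⟨h1, h2, h3⟩ | ⟨h1, h2, h3⟩ | ⟨h1, h2, h3⟩ | ⟨h1, h2, h3⟩ <;> omega
  -- membership of v in the Greene set
  have hmem' : v ∈ {m : ℕ | ∃ S : Finset ℕ, (∀ i ∈ S, 1 ≤ i ∧ i ≤ 2 * n) ∧ m = S.card ∧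
      ∃ f : ℕ → Fin k, ∀ i ∈ S, ∀ j ∈ S, i < j → f i = f j →
        supMinus n lam i ≤ supMinus n lam j} := by
    refine ⟨S, ?_, hScard.symm, ⟨fun i => ⟨g i % k, Nat.mod_lt _ hk0⟩, ?_⟩⟩
    · intro i hi
      rcases hmem i hi with ⟨h1, h2, h3⟩ | ⟨h1, h2, h3⟩ | ⟨h1, h2, h3⟩ | ⟨h1, h2, h3⟩ <;>
        constructor <;> omega
    · intro i hi j hj hij hfij
      have hgi : g i % k = g j % k := by
        simpa using congrArg Fin.val hfij
      rw [Nat.mod_eq_of_lt (hglt i hi), Nat.mod_eq_of_lt (hglt j hj)] at hgi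
      rcases hmem i hi with ⟨h1, h2, h3⟩ | ⟨h1, h2, h3⟩ | ⟨h1, h2, h3⟩ | ⟨h1, h2, h3⟩ <;>
        rcases hmem j hj with ⟨h4, h5, h6⟩ | ⟨h4, h5, h6⟩ | ⟨h4, h5, h6⟩ | ⟨h4, h5, h6⟩ <;>
        try omega
      -- remaining case: i in first half paired block, j in second half paired block
      · set t := i - (n - P + 1) with ht
        have hi' : i = n - P + (t + 1) := by omega
        have hj' : j = n + 1 + t := by omega
        have h2n : 2 * n + 1 - j = n + 1 - (t + 1) := by omega
        rw [supMinus_lo (by omega) h2, supMinus_hi (by omega) (by omega), h2n]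
        have := hgood (t + 1) (by omega) (by omega)
        rw [← hi'] at this
        linarith
  have hbdd : BddAbove {m : ℕ | ∃ S : Finset ℕ, (∀ i ∈ S, 1 ≤ i ∧ i ≤ 2 * n) ∧ m = S.card ∧
      ∃ f : ℕ → Fin k, ∀ i ∈ S, ∀ j ∈ S, i < j → f i = f j →
        supMinus n lam i ≤ supMinus n lam j} := by
    refine ⟨2 * n, ?_⟩
    rintro m ⟨S', hS', rfl, -⟩
    have hsub : S' ⊆ Finset.Icc 1 (2 * n) := fun i hi =>
      Finset.mem_Icc.mpr ⟨(hS' i hi).1, (hS' i hi).2⟩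
    have := Finset.card_le_card hsub
    simpa [Nat.card_Icc] using this
  exact le_csSup hbdd hmem'

lemma greeneC_eq (hdec : ∀ i, 1 ≤ i → i < n → lam (i + 1) < lam i) (k : ℕ) :
    greeneC (2 * n) (supMinus n lam) k = min (2 * k) (min (k + MM n lam) (2 * n)) :=
  le_antisymm (greeneC_le hdec k) (greeneC_ge hdec k)

lemma pShape_eq (hdec : ∀ i, 1 ≤ i → i < n → lam (i + 1) < lam i) (i : ℕ) :
    pShape n lam i = if 1 ≤ i ∧ i ≤ MM n lam then 2
      else if 1 ≤ i ∧ i ≤ 2 * n - MM n lam then 1 else 0 := by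
  have hMn : MM n lam ≤ n := MM_le
  unfold pShape rsShape
  rw [greeneC_eq hdec, greeneC_eq hdec]
  split_ifs <;> omega

lemma ncard_cond (X : ℕ) : Set.ncard {i : ℕ | 1 ≤ i ∧ i ≤ X} = X := by
  have h : {i : ℕ | 1 ≤ i ∧ i ≤ X} = ↑(Finset.Icc 1 X) := by
    ext i; simp [Finset.mem_Icc]
  rw [h, Set.ncard_coe_finset, Nat.card_Icc]
  omega

lemma qShape1 (hdec : ∀ i, 1 ≤ i → i < n → lam (i + 1) < lam i) :
    qShape n lam 1 = 2 * n - MM n lam := by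
  have hMn : MM n lam ≤ n := MM_le
  unfold qShape dualPart
  have h : {i : ℕ | 1 ≤ i ∧ 1 ≤ pShape n lam i} = {i : ℕ | 1 ≤ i ∧ i ≤ 2 * n - MM n lam} := by
    ext i
    simp only [Set.mem_setOf_eq, pShape_eq hdec i]
    split_ifs <;> omega
  rw [h, ncard_cond]

lemma qShape2 (hdec : ∀ i, 1 ≤ i → i < n → lam (i + 1) < lam i) :
    qShape n lam 2 = MM n lam := by
  have hMn : MM n lam ≤ n := MM_le
  unfold qShape dualPart
  have h : {i : ℕ | 1 ≤ i ∧ 2 ≤ pShape n lam i} = {i : ℕ | 1 ≤ i ∧ i ≤ MM n lam} := by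
    ext i
    simp only [Set.mem_setOf_eq, pShape_eq hdec i]
    split_ifs <;> omega
  rw [h, ncard_cond]

lemma qShape3 (hdec : ∀ i, 1 ≤ i → i < n → lam (i + 1) < lam i) {j : ℕ} (hj : 3 ≤ j) :
    qShape n lam j = 0 := by
  unfold qShape dualPart
  have h : {i : ℕ | 1 ≤ i ∧ j ≤ pShape n lam i} = (∅ : Set ℕ) := by
    ext i
    simp only [Set.mem_setOf_eq, Set.mem_empty_iff_false, iff_false, not_and]
    intro h1
    rw [pShape_eq hdec i]
    split_ifs <;> omega
  rw [h, Set.ncard_empty]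

lemma colOdd1 (hdec : ∀ i, 1 ≤ i → i < n → lam (i + 1) < lam i) :
    colOdd (qShape n lam) 1 = (2 * n - MM n lam) / 2 := by
  unfold colOdd
  rw [qShape1 hdec]
  rw [show ((Finset.Icc 1 (2 * n - MM n lam)).filter fun i => Odd (i + 1)) =
      ((Finset.Icc 1 (2 * n - MM n lam)).filter fun i => Even i) from
    Finset.filter_congr (by
      intro i _
      simp only [Nat.odd_iff, Nat.even_iff]
      omega)]
  exact (count_parity _).1

lemma colOdd2 (hdec : ∀ i, 1 ≤ i → i < n → lam (i + 1) < lam i) :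
    colOdd (qShape n lam) 2 = (MM n lam + 1) / 2 := by
  unfold colOdd
  rw [qShape2 hdec]
  rw [show ((Finset.Icc 1 (MM n lam)).filter fun i => Odd (i + 2)) =
      ((Finset.Icc 1 (MM n lam)).filter fun i => ¬ Even i) from
    Finset.filter_congr (by
      intro i _
      simp only [Nat.odd_iff, Nat.even_iff]
      omega)]
  exact (count_parity _).2

lemma rowOdd_eq (hdec : ∀ i, 1 ≤ i → i < n → lam (i + 1) < lam i) (i : ℕ) :
    rowOdd (pShape n lam) i =
      if 1 ≤ i ∧ i ≤ MM n lam then 1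
      else if 1 ≤ i ∧ i ≤ 2 * n - MM n lam ∧ Even i then 1 else 0 := by
  unfold rowOdd
  rw [pShape_eq hdec i]
  by_cases h1 : 1 ≤ i ∧ i ≤ MM n lam
  · rw [if_pos h1, if_pos h1]
    rcases Nat.even_or_odd i with ⟨t, ht⟩ | ⟨t, ht⟩
    · have he : (Finset.Icc 1 2).filter (fun j => Odd (i + j)) = {1} := by
        ext j
        simp only [Finset.mem_filter, Finset.mem_Icc, Finset.mem_singleton, Nat.odd_iff]
        omega
      rw [he, Finset.card_singleton]
    · have he : (Finset.Icc 1 2).filter (fun j => Odd (i + j)) = {2} := by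
        ext j
        simp only [Finset.mem_filter, Finset.mem_Icc, Finset.mem_singleton, Nat.odd_iff]
        omega
      rw [he, Finset.card_singleton]
  · rw [if_neg h1, if_neg h1]
    by_cases h2 : 1 ≤ i ∧ i ≤ 2 * n - MM n lam
    · rw [if_pos h2]
      by_cases heven : Even i
      · rw [if_pos ⟨h2.1, h2.2, heven⟩]
        obtain ⟨t, ht⟩ := heven
        have he : (Finset.Icc 1 1).filter (fun j => Odd (i + j)) = {1} := by
          ext j
          simp only [Finset.mem_filter, Finset.mem_Icc, Finset.mem_singleton, Nat.odd_iff]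
          omega
        rw [he, Finset.card_singleton]
      · rw [if_neg (by tauto)]
        obtain ⟨t, ht⟩ := Nat.not_even_iff_odd.mp heven
        have he : (Finset.Icc 1 1).filter (fun j => Odd (i + j)) = ∅ := by
          ext j
          simp only [Finset.mem_filter, Finset.mem_Icc, Finset.notMem_empty, iff_false,
            Nat.odd_iff, not_and]
          omega
        rw [he, Finset.card_empty]
    · rw [if_neg h2, if_neg (by tauto)]
      simp

lemma Fb_sum (hdec : ∀ i, 1 ≤ i → i < n → lam (i + 1) < lam i) :
    Fb n lam = ∑ i ∈ Finset.Icc 1 (2 * n), (i - 1) * rowOdd (pShape n lam) i := by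
  have hMn : MM n lam ≤ n := MM_le
  unfold Fb
  apply finsum_mem_eq_sum_of_inter_support_eq
  ext i
  simp only [Set.mem_inter_iff, Set.mem_setOf_eq, Function.mem_support, Finset.coe_Icc,
    Set.mem_Icc]
  constructor
  · rintro ⟨h1, h2⟩
    refine ⟨⟨h1, ?_⟩, h2⟩
    by_contra hcon
    rw [Function.mem_support] at h2
    rw [rowOdd_eq hdec i] at h2
    have : ¬ (1 ≤ i ∧ i ≤ MM n lam) := by omega
    have : ¬ (1 ≤ i ∧ i ≤ 2 * n - MM n lam ∧ Even i) := by
      push_neg; intro _ h'; omega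
    simp_all
  · rintro ⟨⟨h1, _⟩, h2⟩
    exact ⟨h1, h2⟩

lemma sq_helper (m : ℕ) : m * (m - 1) + m = m * m := by
  cases m with
  | zero => rfl
  | succ t => simp [Nat.succ_sub_one]; ring

lemma Fb_val (hdec : ∀ i, 1 ≤ i → i < n → lam (i + 1) < lam i) :
    Fb n lam = ((2 * n - MM n lam) / 2) * ((2 * n - MM n lam) / 2)
      + ((MM n lam + 1) / 2) * (((MM n lam + 1) / 2) - 1) := by
  have hMn : MM n lam ≤ n := MM_le
  set M := MM n lam with hM
  rw [Fb_sum hdec]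
  -- split the sum
  have hsplit : ∑ i ∈ Finset.Icc 1 (2 * n), (i - 1) * rowOdd (pShape n lam) i
      = ∑ i ∈ Finset.Ico 1 (M + 1), (i - 1) * rowOdd (pShape n lam) i
        + ∑ i ∈ Finset.Ico (M + 1) (2 * n - M + 1), (i - 1) * rowOdd (pShape n lam) i
        + ∑ i ∈ Finset.Ico (2 * n - M + 1) (2 * n + 1), (i - 1) * rowOdd (pShape n lam) i := by
    rw [Finset.sum_Ico_consecutive _ (by omega) (by omega : M + 1 ≤ 2 * n - M + 1),
      Finset.sum_Ico_consecutive _ (by omega : 1 ≤ 2 * n - M + 1) (by omega)]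
    rw [Finset.Ico_add_one_right_eq_Icc]
  rw [hsplit]
  have e1 : ∑ i ∈ Finset.Ico 1 (M + 1), (i - 1) * rowOdd (pShape n lam) i
      = ∑ i ∈ Finset.Icc 1 M, (i - 1) := by
    rw [Finset.Ico_add_one_right_eq_Icc]
    apply Finset.sum_congr rfl
    intro i hi
    rw [Finset.mem_Icc] at hi
    rw [rowOdd_eq hdec i, if_pos ⟨hi.1, hi.2⟩, mul_one]
  have e2 : ∑ i ∈ Finset.Ico (M + 1) (2 * n - M + 1), (i - 1) * rowOdd (pShape n lam) i
      = ∑ i ∈ Finset.Icc (M + 1) (2 * n - M), (if Even i then i - 1 else 0) := by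
    rw [Finset.Ico_add_one_right_eq_Icc]
    apply Finset.sum_congr rfl
    intro i hi
    rw [Finset.mem_Icc] at hi
    rw [rowOdd_eq hdec i, if_neg (by omega)]
    by_cases he : Even i
    · rw [if_pos ⟨by omega, by omega, he⟩, if_pos he, mul_one]
    · rw [if_neg (by tauto), if_neg he, mul_zero]
  have e3 : ∑ i ∈ Finset.Ico (2 * n - M + 1) (2 * n + 1), (i - 1) * rowOdd (pShape n lam) i
      = 0 := by
    apply Finset.sum_eq_zero
    intro i hi
    rw [Finset.mem_Ico] at hi
    rw [rowOdd_eq hdec i, if_neg (by omega), if_neg (by push_neg; intro _ h'; omega), mul_zero]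
  rw [e1, e2, e3]
  have hs1 := sum_Icc_pred M
  rcases Nat.even_or_odd M with ⟨a, ha⟩ | ⟨a, ha⟩
  · -- M = 2a
    have hM2 : M = 2 * a := by omega
    have hb : 2 * n - M = 2 * (n - a) := by omega
    have hsum2 : ∑ i ∈ Finset.Icc (M + 1) (2 * n - M), (if Even i then i - 1 else 0)
        = (n - a) * (n - a) - a * a := by
      rw [hb, hM2]
      exact odd_sum a (n - a) (by omega)
    rw [hsum2]
    have hAB : a * a ≤ (n - a) * (n - a) := Nat.mul_le_mul (by omega) (by omega)
    have hq1 : (2 * n - M) / 2 = n - a := by omega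
    have hq2 : (M + 1) / 2 = a := by omega
    rw [hq1, hq2]
    have hMsq : M * (M - 1) + M = M * M := sq_helper M
    have hMM : M * M = 4 * (a * a) := by rw [hM2]; ring
    have haa : a * (a - 1) + a = a * a := sq_helper a
    omega
  · -- M = 2a + 1
    have hM2 : M = 2 * a + 1 := by omega
    have hb : 2 * n - M = 2 * (n - a - 1) + 1 := by omega
    have hsum2 : ∑ i ∈ Finset.Icc (M + 1) (2 * n - M), (if Even i then i - 1 else 0)
        = (n - a - 1) * (n - a - 1) - a * a := by
      have hins : Finset.Icc (2 * a + 1) (2 * (n - a - 1) + 1)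
          = insert (2 * a + 1) (Finset.Icc (2 * a + 2) (2 * (n - a - 1) + 1)) :=
        (Finset.insert_Icc_add_one_left_eq_Icc (by omega)).symm
      have := odd_sum' a (n - a - 1) (by omega)
      rw [hins, Finset.sum_insert (by simp), if_neg (by simp [Nat.even_add_one, parity_simps])] at this
      rw [hb, hM2]
      simpa using this
    rw [hsum2]
    have hAB : a * a ≤ (n - a - 1) * (n - a - 1) := Nat.mul_le_mul (by omega) (by omega)
    have hq1 : (2 * n - M) / 2 = n - a - 1 := by omega
    have hq2 : (M + 1) / 2 = a + 1 := by omega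
    rw [hq1, hq2]
    have hMsq : M * (M - 1) + M = M * M := sq_helper M
    have hMM : M * M = 4 * (a * a) + 4 * a + 1 := by rw [hM2]; ring
    have haa : (a + 1) * (a + 1 - 1) = a * a + a := by simp; ring
    omega

theorem gkdim_formula_sp_integral' (n' : ℕ) (lam' : ℕ → ℝ)
    (hdec' : ∀ i, 1 ≤ i → i < n' → lam' (i + 1) < lam' i) :
    (∀ j, 3 ≤ j → qShape n' lam' j = 0) ∧
    qShape n' lam' 1 + qShape n' lam' 2 = 2 * n' ∧
    colOdd (qShape n' lam') 1 + colOdd (qShape n' lam') 2 = n' ∧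
    Fb n' lam' = colOdd (qShape n' lam') 1 ^ 2 +
      colOdd (qShape n' lam') 2 * (colOdd (qShape n' lam') 2 - 1) ∧
    (n' : ℤ) ^ 2 - (Fb n' lam' : ℤ) =
      (colOdd (qShape n' lam') 2 : ℤ) *
        (2 * (n' : ℤ) + 1 - 2 * (colOdd (qShape n' lam') 2 : ℤ)) := by
  have hMn : MM n' lam' ≤ n' := MM_le
  have h3 : ∀ j, 3 ≤ j → qShape n' lam' j = 0 := fun j hj => qShape3 hdec' hj
  have hq12 : qShape n' lam' 1 + qShape n' lam' 2 = 2 * n' := by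
    rw [qShape1 hdec', qShape2 hdec']; omega
  have hcol : colOdd (qShape n' lam') 1 + colOdd (qShape n' lam') 2 = n' := by
    rw [colOdd1 hdec', colOdd2 hdec']; omega
  have hFb : Fb n' lam' = colOdd (qShape n' lam') 1 ^ 2 +
      colOdd (qShape n' lam') 2 * (colOdd (qShape n' lam') 2 - 1) := by
    rw [Fb_val hdec', colOdd1 hdec', colOdd2 hdec', pow_two]
  refine ⟨h3, hq12, hcol, hFb, ?_⟩
  set c1 := colOdd (qShape n' lam') 1 with hc1
  set c2 := colOdd (qShape n' lam') 2 with hc2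
  have hn : (c1 : ℤ) + c2 = n' := by exact_mod_cast congrArg (Nat.cast : ℕ → ℤ) hcol
  by_cases h0 : c2 = 0
  · rw [hFb, h0]
    push_cast
    rw [h0] at hn
    push_cast at hn
    nlinarith [hn]
  · have h1 : 1 ≤ c2 := by omega
    rw [hFb]
    push_cast [Nat.cast_sub h1]
    linear_combination ((c2 : ℤ) - c1 - n') * hn

/-- for `λ_1 > … > λ_n`, with `q = ᵗp(λ⁻)`: the shape has at most two
columns, `q_1 + q_2 = 2n`, `q_1^odd + q_2^odd = n`,
`F_b(λ⁻) = (q_1^odd)² + q_2^odd(q_2^odd − 1)`, and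
`n² − F_b(λ⁻) = q_2^odd(2n + 1 − 2q_2^odd)`. -/
theorem gkdim_formula_sp_integral (n : ℕ) (lam : ℕ → ℝ)
    (hdec : ∀ i, 1 ≤ i → i < n → lam (i + 1) < lam i) :
    (∀ j, 3 ≤ j → qShape n lam j = 0) ∧
    qShape n lam 1 + qShape n lam 2 = 2 * n ∧
    colOdd (qShape n lam) 1 + colOdd (qShape n lam) 2 = n ∧
    Fb n lam = colOdd (qShape n lam) 1 ^ 2 +
      colOdd (qShape n lam) 2 * (colOdd (qShape n lam) 2 - 1) ∧
    (n : ℤ) ^ 2 - (Fb n lam : ℤ) =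
      (colOdd (qShape n lam) 2 : ℤ) *
        (2 * (n : ℤ) + 1 - 2 * (colOdd (qShape n lam) 2 : ℤ)) := by
  exact gkdim_formula_sp_integral' n lam hdec
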